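/- arXiv:1507.06523 — 3 statements merged into one kernel-verified Lean document; each statement's English description precedes it below -/
import Mathlib

section
/- If an irrational number α ∈ (0,1) satisfies condition (A1), then α is not a Liouville number. -/
/-- Condition (A1): there exist `N₀, N₁ > 0` such that for all integers `n₁, n₂, n₃` with
`|n₁| + |n₂| + |n₃| > N₁`, either `n₁ + α n₂ + α² n₃ = 0` or
`|n₁ + α n₂ + α² n₃| > (|n₁| + |n₂| + |n₃|)^(-N₀)`. -/
def CondA1 (α : ℝ) : Prop :=
  ∃ N₀ N₁ : ℝ, 0 < N₀ ∧ 0 < N₁ ∧ ∀ n₁ n₂ n₃ : ℤ,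
    N₁ < ((|n₁| + |n₂| + |n₃| : ℤ) : ℝ) →
    ((n₁ : ℝ) + α * n₂ + α ^ 2 * n₃ = 0 ∨
      (((|n₁| + |n₂| + |n₃| : ℤ) : ℝ)) ^ (-N₀) < |(n₁ : ℝ) + α * n₂ + α ^ 2 * n₃|)

/-- If an irrational number `α ∈ (0,1)` satisfies condition (A1), then `α` is not a
Liouville number. -/
theorem stmt_2 (α : ℝ) (hα : α ∈ Set.Ioo (0 : ℝ) 1) (hirr : Irrational α)
    (hA1 : CondA1 α) : ¬ Liouville α := by
  obtain ⟨hα0, hα1⟩ := hα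
  obtain ⟨N₀, N₁, hN₀, hN₁, hA⟩ := hA1
  intro hL
  set n : ℕ := ⌈2 * N₀⌉₊ + 1 with hn
  have hn2 : 2 * N₀ + 1 ≤ (n : ℝ) := by
    have := Nat.le_ceil (2 * N₀)
    push_cast [hn]; linarith
  obtain ⟨b, hbB, a, hne, hlt⟩ :=
    (Filter.frequently_atTop.1 (hL.frequently_exists_num n)) (max 3 (⌈N₁⌉₊ + 1))
  have hb3 : (3 : ℕ) ≤ b := le_trans (le_max_left _ _) hbB
  have hb3R : (3 : ℝ) ≤ (b : ℝ) := by exact_mod_cast hb3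
  have hb0 : (0 : ℝ) < (b : ℝ) := by linarith
  have hb1 : (1 : ℝ) < (b : ℝ) := by linarith
  have hbN₁ : N₁ < (b : ℝ) := by
    have h1 : (⌈N₁⌉₊ + 1 : ℕ) ≤ b := le_trans (le_max_right _ _) hbB
    have h2 : N₁ ≤ (⌈N₁⌉₊ : ℝ) := Nat.le_ceil N₁
    have : ((⌈N₁⌉₊ : ℕ) : ℝ) + 1 ≤ (b : ℝ) := by exact_mod_cast h1
    linarith
  -- bound on |a|
  have hpow_pos : (0 : ℝ) < (b : ℝ) ^ n := pow_pos hb0 n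
  have hpow1 : (1 : ℝ) / (b : ℝ) ^ n ≤ 1 := by
    rw [div_le_one hpow_pos]
    exact one_le_pow₀ hb1.le
  have hab : |α - a / b| < 1 := lt_of_lt_of_le hlt hpow1
  have hdiv : -1 < (a : ℝ) / b ∧ (a : ℝ) / b < 2 := by
    rw [abs_sub_lt_iff] at hab
    constructor <;> nlinarith [hab.1, hab.2]
  have haR : |(a : ℝ)| ≤ 2 * b := by
    rw [abs_le]
    have h2b : (a : ℝ) < 2 * b := (div_lt_iff₀ hb0).1 hdiv.2
    have hmb : (-1 : ℝ) * b < a := (lt_div_iff₀ hb0).1 hdiv.1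
    constructor <;> nlinarith
  -- apply condition (A1) to the triple (-a, b, 0)
  have hSR : ((|(-a)| + |(b : ℤ)| + |(0 : ℤ)| : ℤ) : ℝ) = |(a : ℝ)| + b := by
    push_cast [abs_neg]
    simp
  have hSN : N₁ < ((|(-a)| + |(b : ℤ)| + |(0 : ℤ)| : ℤ) : ℝ) := by
    rw [hSR]
    have := abs_nonneg (a : ℝ)
    linarith
  have hval : ((-a : ℤ) : ℝ) + α * ((b : ℤ) : ℝ) + α ^ 2 * ((0 : ℤ) : ℝ) = α * b - a := by
    push_cast; ring
  have hne0 : α * b - (a : ℝ) ≠ 0 := by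
    intro h
    apply hne
    field_simp
    linarith [h]
  rcases hA (-a) (b : ℤ) 0 hSN with h | h
  · rw [hval] at h; exact hne0 h
  rw [hval] at h
  -- upper bound for the absolute value
  have habs : |α * b - (a : ℝ)| = b * |α - a / b| := by
    rw [← abs_of_pos hb0, ← abs_mul]
    congr 1
    field_simp
    rw [abs_of_pos hb0]; ring
  have hupper : |α * b - (a : ℝ)| < (b : ℝ) * (1 / (b : ℝ) ^ n) := by
    rw [habs]
    exact (mul_lt_mul_iff_right₀ hb0).2 hlt
  -- lower bound for the rpow
  have hS1 : (1 : ℝ) ≤ ((|(-a)| + |(b : ℤ)| + |(0 : ℤ)| : ℤ) : ℝ) := by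
    rw [hSR]; have := abs_nonneg (a : ℝ); linarith
  have hS3b : ((|(-a)| + |(b : ℤ)| + |(0 : ℤ)| : ℤ) : ℝ) ≤ (b : ℝ) ^ 2 := by
    rw [hSR]; nlinarith
  have hlow : ((b : ℝ) ^ 2) ^ (-N₀) ≤ ((|(-a)| + |(b : ℤ)| + |(0 : ℤ)| : ℤ) : ℝ) ^ (-N₀) := by
    rw [Real.rpow_neg (by positivity), Real.rpow_neg (by linarith)]
    apply inv_anti₀
    · exact Real.rpow_pos_of_pos (by linarith) _
    · exact Real.rpow_le_rpow (by linarith) hS3b hN₀.le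
  have hkey : (b : ℝ) ^ (-(2 * N₀)) < (b : ℝ) ^ ((1 : ℝ) - n) := by
    have h1 : (b : ℝ) ^ (-(2 * N₀)) = ((b : ℝ) ^ 2) ^ (-N₀) := by
      rw [← Real.rpow_natCast (b : ℝ) 2, ← Real.rpow_mul hb0.le]
      norm_num
    have h2 : (b : ℝ) * (1 / (b : ℝ) ^ n) = (b : ℝ) ^ ((1 : ℝ) - n) := by
      rw [sub_eq_add_neg, Real.rpow_add hb0, Real.rpow_one, Real.rpow_neg hb0.le,
        Real.rpow_natCast]
      ring
    rw [h1, ← h2]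
    exact lt_of_le_of_lt hlow (lt_trans h hupper)
  have := (Real.rpow_lt_rpow_left_iff hb1).1 hkey
  linarith
end

section
/- Let d₁, d₂ > 0 and p_r := 2π(r₁/d₁, r₂/d₂) for r ∈ ℤ². Let R₀, W₀ > 0 and w : ℤ² → ℂ with w_q = 0 whenever |p_q| ≥ R₀ and Σ_q |w_q| ≤ W₀. Fix j ∈ ℕ. Suppose k ∈ ℝ² with |k| ≥ max(2, 4 j R₀), λ ∈ ℝ with |λ − |k|²| ≤ 1, and C : ℤ² → ℂ satisfies Σ_r |C_r| ≤ 2 together with the recursion (λ − |k+p_r|²) C_r = Σ_{q∈ℤ²} w_q C_{r−q} for all r ∈ ℤ². Then there is a constant c(j, W₀), depending only on j and W₀, such that Σ_{r : |k+p_r| < |k|/4} |C_r| ≤ c(j, W₀) |k|^{−j}. -/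
open MeasureTheory
open scoped ENNReal

/-- The dual lattice vectors `p_r = 2π (r₁/d₁, r₂/d₂)`. -/
noncomputable def dualVec (d₁ d₂ : ℝ) (r : ℤ × ℤ) : EuclideanSpace ℝ (Fin 2) :=
  EuclideanSpace.single 0 (2 * Real.pi * (r.1 : ℝ) / d₁) +
    EuclideanSpace.single 1 (2 * Real.pi * (r.2 : ℝ) / d₂)

set_option maxHeartbeats 2000000 in
/-- If `w_q = 0` for `|p_q| ≥ R₀`, `Σ_q |w_q| ≤ W₀`, `|k| ≥ max(2, 4jR₀)`, `|λ − |k|²| ≤ 1`,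
`Σ_r |C_r| ≤ 2` and the recursion `(λ − |k+p_r|²) C_r = Σ_q w_q C_{r−q}` holds, then
`Σ_{r : |k+p_r| < |k|/4} |C_r| ≤ c(j, W₀) |k|^{−j}` with a constant depending only
on `j` and `W₀`. -/
theorem stmt_7 (j : ℕ) (W₀ : ℝ) (hW₀ : 0 < W₀) :
    ∃ c : ℝ, ∀ d₁ d₂ : ℝ, 0 < d₁ → 0 < d₂ →
    ∀ R₀ : ℝ, 0 < R₀ →
    ∀ w : ℤ × ℤ → ℂ, (∀ q : ℤ × ℤ, R₀ ≤ ‖dualVec d₁ d₂ q‖ → w q = 0) →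
      Summable (fun q : ℤ × ℤ => ‖w q‖) → (∑' q : ℤ × ℤ, ‖w q‖) ≤ W₀ →
    ∀ k : EuclideanSpace ℝ (Fin 2), max 2 (4 * (j : ℝ) * R₀) ≤ ‖k‖ →
    ∀ lam : ℝ, |lam - ‖k‖ ^ 2| ≤ 1 →
    ∀ C : ℤ × ℤ → ℂ, Summable (fun r : ℤ × ℤ => ‖C r‖) → (∑' r : ℤ × ℤ, ‖C r‖) ≤ 2 →
      (∀ r : ℤ × ℤ,
        ((lam - ‖k + dualVec d₁ d₂ r‖ ^ 2 : ℝ) : ℂ) * C r = ∑' q : ℤ × ℤ, w q * C (r - q)) →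
      (∑' r : {r : ℤ × ℤ // ‖k + dualVec d₁ d₂ r‖ < ‖k‖ / 4}, ‖C r.1‖) ≤ c / ‖k‖ ^ j := by
  refine ⟨2 * (2 * W₀) ^ j, ?_⟩
  intro d₁ d₂ hd₁ hd₂ R₀ hR₀ w hw0 hwsum hwW k hk lam hlam C hCsum hC2 hrec
  set p : ℤ × ℤ → EuclideanSpace ℝ (Fin 2) := dualVec d₁ d₂ with hp
  set K := ‖k‖ with hKdef
  have h2K : (2:ℝ) ≤ K := le_trans (le_max_left _ _) hk
  have hK0 : (0:ℝ) < K := by linarith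
  have hK1 : (1:ℝ) ≤ K := by linarith
  have hjR : 4 * (j:ℝ) * R₀ ≤ K := le_trans (le_max_right _ _) hk
  have hjR4 : (j:ℝ) * R₀ ≤ K / 4 := by nlinarith
  have hK2 : (0:ℝ) < K ^ 2 := by positivity
  -- additivity of p
  have hpsub : ∀ a b : ℤ × ℤ, p (a - b) = p a - p b := by
    intro a b
    ext i
    fin_cases i <;>
      · simp [hp, dualVec, EuclideanSpace.single_apply]
        push_cast
        ring
  -- bounds on C
  have hCb : ∀ r : ℤ × ℤ, ‖C r‖ ≤ 2 :=
    fun r => le_trans (Summable.le_tsum hCsum r fun _ _ => norm_nonneg _) hC2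
  have hsum_wc : ∀ r : ℤ × ℤ, Summable (fun q : ℤ × ℤ => ‖w q‖ * ‖C (r - q)‖) := by
    intro r
    refine Summable.of_nonneg_of_le (fun q => by positivity)
      (fun q => mul_le_mul_of_nonneg_left (hCb _) (norm_nonneg _)) (hwsum.mul_right 2)
  -- key pointwise estimate
  have key : ∀ r : ℤ × ℤ, ‖k + p r‖ ≤ K / 2 →
      ‖C r‖ ≤ 2 / K ^ 2 * ∑' q : ℤ × ℤ, ‖w q‖ * ‖C (r - q)‖ := by
    intro r hr
    have hE : ‖k + p r‖ ^ 2 ≤ K ^ 2 / 4 := by nlinarith [norm_nonneg (k + p r)]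
    have hl := abs_le.mp hlam
    have hgap : K ^ 2 / 2 ≤ |lam - ‖k + p r‖ ^ 2| := by
      refine le_trans ?_ (le_abs_self _); nlinarith
    have h1 : |lam - ‖k + p r‖ ^ 2| * ‖C r‖ ≤ ∑' q : ℤ × ℤ, ‖w q‖ * ‖C (r - q)‖ := by
      have h2 := congrArg norm (hrec r)
      rw [norm_mul, Complex.norm_real] at h2
      calc |lam - ‖k + p r‖ ^ 2| * ‖C r‖ = ‖∑' q : ℤ × ℤ, w q * C (r - q)‖ := h2
        _ ≤ ∑' q : ℤ × ℤ, ‖w q * C (r - q)‖ :=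
            norm_tsum_le_tsum_norm (by simpa [norm_mul] using hsum_wc r)
        _ = ∑' q : ℤ × ℤ, ‖w q‖ * ‖C (r - q)‖ := by simp [norm_mul]
    have hS0 : (0:ℝ) ≤ ∑' q : ℤ × ℤ, ‖w q‖ * ‖C (r - q)‖ :=
      tsum_nonneg fun q => by positivity
    rw [div_mul_eq_mul_div, le_div_iff₀ hK2]
    nlinarith [mul_le_mul_of_nonneg_right hgap (norm_nonneg (C r))]
  -- pass to ℝ≥0∞
  set g : ℤ × ℤ → ℝ≥0∞ := fun r => ENNReal.ofReal ‖C r‖ with hg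
  set Wf : ℤ × ℤ → ℝ≥0∞ := fun q => ENNReal.ofReal ‖w q‖ with hWf
  have keyE : ∀ r : ℤ × ℤ, ‖k + p r‖ ≤ K / 2 →
      g r ≤ ENNReal.ofReal (2 / K ^ 2) * ∑' q : ℤ × ℤ, Wf q * g (r - q) := by
    intro r hr
    have h1 := key r hr
    have h2 : ENNReal.ofReal (∑' q : ℤ × ℤ, ‖w q‖ * ‖C (r - q)‖)
        = ∑' q : ℤ × ℤ, Wf q * g (r - q) := by
      rw [ENNReal.ofReal_tsum_of_nonneg (fun q => by positivity) (hsum_wc r)]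
      exact tsum_congr fun q => ENNReal.ofReal_mul (norm_nonneg _)
    calc g r ≤ ENNReal.ofReal (2 / K ^ 2 * ∑' q : ℤ × ℤ, ‖w q‖ * ‖C (r - q)‖) :=
          ENNReal.ofReal_le_ofReal h1
      _ = ENNReal.ofReal (2 / K ^ 2) * ∑' q : ℤ × ℤ, Wf q * g (r - q) := by
          rw [ENNReal.ofReal_mul (by positivity), h2]
  have hWfsum : ∑' q : ℤ × ℤ, Wf q ≤ ENNReal.ofReal W₀ := by
    rw [hWf, ← ENNReal.ofReal_tsum_of_nonneg (fun _ => norm_nonneg _) hwsum]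
    exact ENNReal.ofReal_le_ofReal hwW
  -- main induction
  have main : ∀ m : ℕ, m ≤ j →
      (∑' r : ℤ × ℤ, Set.indicator {x : ℤ × ℤ | ‖k + p x‖ < K / 4 + ((j - m : ℕ) : ℝ) * R₀}
        g r) ≤ ENNReal.ofReal 2 * (ENNReal.ofReal (2 * W₀ / K ^ 2)) ^ m := by
    intro m
    induction m with
    | zero =>
      intro _
      simp only [pow_zero, mul_one]
      refine le_trans (ENNReal.tsum_le_tsum fun r => Set.indicator_le_self _ _ r) ?_
      rw [hg, ← ENNReal.ofReal_tsum_of_nonneg (fun _ => norm_nonneg _) hCsum]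
      exact ENNReal.ofReal_le_ofReal hC2
    | succ m ih =>
      intro hmj
      have hm : m ≤ j := le_of_lt hmj
      have hmlt : m < j := hmj
      set S : Set (ℤ × ℤ) := {x : ℤ × ℤ | ‖k + p x‖ < K / 4 + ((j - m : ℕ) : ℝ) * R₀} with hS
      set S' : Set (ℤ × ℤ) :=
        {x : ℤ × ℤ | ‖k + p x‖ < K / 4 + ((j - (m + 1) : ℕ) : ℝ) * R₀} with hS'
      have hcast : ((j - (m + 1) : ℕ) : ℝ) + 1 = ((j - m : ℕ) : ℝ) := by
        have : (j - (m + 1)) + 1 = j - m := by omega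
        push_cast [← this]; ring
      have hjm : ((j - (m + 1) : ℕ) : ℝ) ≤ (j : ℝ) :=
        Nat.cast_le.mpr (Nat.sub_le _ _)
      have hhalf : ∀ x ∈ S', ‖k + p x‖ ≤ K / 2 := by
        intro x hx
        have hx' : ‖k + p x‖ < K / 4 + ((j - (m + 1) : ℕ) : ℝ) * R₀ := hx
        have : ((j - (m + 1) : ℕ) : ℝ) * R₀ ≤ (j : ℝ) * R₀ :=
          mul_le_mul_of_nonneg_right hjm hR₀.le
        linarith
      -- step 1: pointwise bound
      have step1 : (∑' r : ℤ × ℤ, Set.indicator S' g r)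
          ≤ ENNReal.ofReal (2 / K ^ 2) *
            ∑' r : ℤ × ℤ, Set.indicator S' (fun x => ∑' q : ℤ × ℤ, Wf q * g (x - q)) r := by
        rw [← ENNReal.tsum_mul_left]
        refine ENNReal.tsum_le_tsum fun r => ?_
        by_cases hr : r ∈ S'
        · rw [Set.indicator_of_mem hr, Set.indicator_of_mem hr]
          exact keyE r (hhalf r hr)
        · rw [Set.indicator_of_notMem hr, Set.indicator_of_notMem hr, mul_zero]
      -- step 2: swap sums
      have step2 : (∑' r : ℤ × ℤ, Set.indicator S'
            (fun x => ∑' q : ℤ × ℤ, Wf q * g (x - q)) r)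
          = ∑' q : ℤ × ℤ, Wf q * ∑' r : ℤ × ℤ, Set.indicator S' (fun x => g (x - q)) r := by
        have h1 : ∀ r : ℤ × ℤ, Set.indicator S' (fun x => ∑' q : ℤ × ℤ, Wf q * g (x - q)) r
            = ∑' q : ℤ × ℤ, Wf q * Set.indicator S' (fun x => g (x - q)) r := by
          intro r
          by_cases hr : r ∈ S'
          · simp [Set.indicator_of_mem hr]
          · simp [Set.indicator_of_notMem hr]
        rw [tsum_congr h1, ENNReal.tsum_comm]
        exact tsum_congr fun q => ENNReal.tsum_mul_left
      -- step 3: per-q shift bound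
      have step3 : ∀ q : ℤ × ℤ, Wf q * (∑' r : ℤ × ℤ, Set.indicator S' (fun x => g (x - q)) r)
          ≤ Wf q * ∑' r : ℤ × ℤ, Set.indicator S g r := by
        intro q
        by_cases hwq : w q = 0
        · simp [hWf, hwq]
        · have hpq : ‖p q‖ < R₀ := by
            by_contra h
            exact hwq (hw0 q (le_of_not_gt h))
          refine mul_le_mul_right ?_ _
          have hre : (∑' r : ℤ × ℤ, Set.indicator S' (fun x => g (x - q)) r)
              = ∑' s : ℤ × ℤ, Set.indicator S' (fun x => g (x - q)) (s + q) :=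
            ((Equiv.addRight q).tsum_eq _).symm
          rw [hre]
          refine ENNReal.tsum_le_tsum fun s => ?_
          by_cases hs : s + q ∈ S'
          · have hsS : s ∈ S := by
              have hs' : ‖k + p (s + q)‖ < K / 4 + ((j - (m + 1) : ℕ) : ℝ) * R₀ := hs
              have hps : p s = p (s + q) - p q := by
                rw [← hpsub (s + q) q, add_sub_cancel_right]
              have : ‖k + p s‖ ≤ ‖k + p (s + q)‖ + ‖p q‖ := by
                rw [hps]
                calc ‖k + (p (s + q) - p q)‖ = ‖(k + p (s + q)) + (-(p q))‖ := by
                      rw [sub_eq_add_neg, ← add_assoc]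
                  _ ≤ ‖k + p (s + q)‖ + ‖-(p q)‖ := norm_add_le _ _
                  _ = ‖k + p (s + q)‖ + ‖p q‖ := by rw [norm_neg]
              have : ‖k + p s‖ < K / 4 + ((j - (m + 1) : ℕ) : ℝ) * R₀ + R₀ := by linarith
              show ‖k + p s‖ < K / 4 + ((j - m : ℕ) : ℝ) * R₀
              calc ‖k + p s‖ < K / 4 + ((j - (m + 1) : ℕ) : ℝ) * R₀ + R₀ := this
                _ = K / 4 + (((j - (m + 1) : ℕ) : ℝ) + 1) * R₀ := by ring
                _ = K / 4 + ((j - m : ℕ) : ℝ) * R₀ := by rw [hcast]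
            rw [Set.indicator_of_mem hs, Set.indicator_of_mem hsS, add_sub_cancel_right]
          · rw [Set.indicator_of_notMem hs]
            exact zero_le
      -- combine
      have hX : ENNReal.ofReal (2 / K ^ 2) * ENNReal.ofReal W₀
          = ENNReal.ofReal (2 * W₀ / K ^ 2) := by
        rw [← ENNReal.ofReal_mul (by positivity)]
        ring_nf
      calc (∑' r : ℤ × ℤ, Set.indicator S' g r)
          ≤ ENNReal.ofReal (2 / K ^ 2) *
            ∑' q : ℤ × ℤ, Wf q * ∑' r : ℤ × ℤ, Set.indicator S' (fun x => g (x - q)) r := by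
            rw [← step2]; exact step1
        _ ≤ ENNReal.ofReal (2 / K ^ 2) *
            ∑' q : ℤ × ℤ, Wf q * ∑' r : ℤ × ℤ, Set.indicator S g r :=
            mul_le_mul_right (ENNReal.tsum_le_tsum step3) _
        _ = ENNReal.ofReal (2 / K ^ 2) *
            ((∑' q : ℤ × ℤ, Wf q) * ∑' r : ℤ × ℤ, Set.indicator S g r) := by
            rw [ENNReal.tsum_mul_right]
        _ ≤ ENNReal.ofReal (2 / K ^ 2) *
            (ENNReal.ofReal W₀ * (ENNReal.ofReal 2 * (ENNReal.ofReal (2 * W₀ / K ^ 2)) ^ m)) :=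
            mul_le_mul_right (mul_le_mul' hWfsum (ih hm)) _
        _ = ENNReal.ofReal 2 * (ENNReal.ofReal (2 * W₀ / K ^ 2)) ^ (m + 1) := by
            rw [← mul_assoc, hX, pow_succ]
            ring
  -- conclude
  have final := main j le_rfl
  have hSj : {x : ℤ × ℤ | ‖k + p x‖ < K / 4 + ((j - j : ℕ) : ℝ) * R₀}
      = {x : ℤ × ℤ | ‖k + p x‖ < K / 4} := by
    simp
  rw [hSj] at final
  have hsub : Summable (fun r : {r : ℤ × ℤ // ‖k + dualVec d₁ d₂ r‖ < ‖k‖ / 4} => ‖C r.1‖) :=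
    hCsum.subtype _
  have heq : ENNReal.ofReal (∑' r : {r : ℤ × ℤ // ‖k + dualVec d₁ d₂ r‖ < ‖k‖ / 4}, ‖C r.1‖)
      = ∑' r : ℤ × ℤ, Set.indicator {x : ℤ × ℤ | ‖k + p x‖ < K / 4} g r := by
    rw [ENNReal.ofReal_tsum_of_nonneg (fun _ => norm_nonneg _) hsub]
    exact (tsum_subtype {x : ℤ × ℤ | ‖k + p x‖ < K / 4} g)
  have hofle : ENNReal.ofReal (∑' r : {r : ℤ × ℤ // ‖k + dualVec d₁ d₂ r‖ < ‖k‖ / 4}, ‖C r.1‖)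
      ≤ ENNReal.ofReal (2 * (2 * W₀ / K ^ 2) ^ j) := by
    rw [heq]
    refine le_trans final ?_
    rw [ENNReal.ofReal_mul (by norm_num), ENNReal.ofReal_pow (by positivity)]
  have hreal : (∑' r : {r : ℤ × ℤ // ‖k + dualVec d₁ d₂ r‖ < ‖k‖ / 4}, ‖C r.1‖)
      ≤ 2 * (2 * W₀ / K ^ 2) ^ j :=
    (ENNReal.ofReal_le_ofReal_iff (by positivity)).mp hofle
  refine le_trans hreal ?_
  have hdiv : 2 * W₀ / K ^ 2 ≤ 2 * W₀ / K :=
    div_le_div_of_nonneg_left (by positivity) hK0 (by nlinarith)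
  have hbound : 2 * (2 * W₀ / K ^ 2) ^ j ≤ 2 * (2 * W₀ / K) ^ j :=
    mul_le_mul_of_nonneg_left (pow_le_pow_left₀ (by positivity) hdiv j) (by norm_num)
  calc 2 * (2 * W₀ / K ^ 2) ^ j ≤ 2 * (2 * W₀ / K) ^ j := hbound
    _ = 2 * (2 * W₀) ^ j / K ^ j := by rw [div_pow]; ring
end

section
/- Let h ∈ C_c²(ℝ²) (twice continuously differentiable with compact support), λ : ℝ² → ℝ twice continuously differentiable, and t ∈ ℝ. Define w(x) = (1/2π) ∫_{ℝ²} h(k) e^{i(⟨k,x⟩ − tλ(k))} dk. Then for every x ∈ ℝ²: |x|² · w(x) = (1/2π) ∫_{ℝ²} e^{i(⟨k,x⟩ − tλ(k))} ( t² |∇λ(k)|² h(k) − Δh(k) + 2it ⟨∇λ(k), ∇h(k)⟩ + it (Δλ(k)) h(k) ) dk. -/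
open MeasureTheory

/-- Pointwise Laplacian of a complex-valued function on `ℝ²`. -/
noncomputable def lapC (f : EuclideanSpace ℝ (Fin 2) → ℂ)
    (x : EuclideanSpace ℝ (Fin 2)) : ℂ :=
  ∑ i : Fin 2,
    fderiv ℝ (fun y => fderiv ℝ f y (EuclideanSpace.single i 1)) x (EuclideanSpace.single i 1)

/-- Pointwise Laplacian of a real-valued function on `ℝ²`. -/
noncomputable def lapR (f : EuclideanSpace ℝ (Fin 2) → ℝ)
    (x : EuclideanSpace ℝ (Fin 2)) : ℝ :=
  ∑ i : Fin 2,
    fderiv ℝ (fun y => fderiv ℝ f y (EuclideanSpace.single i 1)) x (EuclideanSpace.single i 1)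

noncomputable abbrev E2 := EuclideanSpace ℝ (Fin 2)

noncomputable def ex (x k : E2) : ℂ := Complex.exp (Complex.I * ((inner ℝ k x : ℝ) : ℂ))

lemma hasFDerivAt_ex (x k : E2) : HasFDerivAt (ex x)
    (ex x k • (Complex.I • (Complex.ofRealCLM.comp (innerSL ℝ x)))) k := by
  have h1 : HasFDerivAt (fun k : E2 => ((inner ℝ k x : ℝ) : ℂ))
      (Complex.ofRealCLM.comp (innerSL ℝ x)) k := by
    have : (fun k : E2 => ((inner ℝ k x : ℝ) : ℂ)) =
        fun k => Complex.ofRealCLM ((innerSL ℝ x) k) := by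
      ext k; simp [real_inner_comm]
    rw [this]
    exact (Complex.ofRealCLM.hasFDerivAt.comp k (innerSL ℝ x).hasFDerivAt)
  exact (Complex.hasDerivAt_exp _).comp_hasFDerivAt k (h1.const_mul Complex.I)

lemma fderiv_ex (x k v : E2) :
    fderiv ℝ (ex x) k v = ex x k * (Complex.I * ((inner ℝ v x : ℝ) : ℂ)) := by
  rw [(hasFDerivAt_ex x k).fderiv]
  simp only [ContinuousLinearMap.smul_apply, ContinuousLinearMap.coe_comp', Function.comp_apply,
    innerSL_apply_apply, smul_eq_mul, Complex.ofRealCLM_apply, real_inner_comm]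

lemma continuous_ex (x : E2) : Continuous (ex x) :=
  Complex.continuous_exp.comp (continuous_const.mul
    (Complex.continuous_ofReal.comp (continuous_id.inner continuous_const)))

lemma differentiable_ex (x : E2) : Differentiable ℝ (ex x) :=
  fun k => (hasFDerivAt_ex x k).differentiableAt

lemma ibp (F : E2 → ℂ) (hF : ContDiff ℝ 1 F) (hFs : HasCompactSupport F) (x v : E2) :
    ∫ k : E2, fderiv ℝ F k v * ex x k
      = -(Complex.I * ((inner ℝ v x : ℝ) : ℂ)) * ∫ k : E2, F k * ex x k := by
  have hdF : Differentiable ℝ F := hF.differentiable one_ne_zero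
  have hcdF : Continuous fun k => fderiv ℝ F k v :=
    ((hF.continuous_fderiv one_ne_zero).clm_apply continuous_const)
  have hsdF : HasCompactSupport fun k => fderiv ℝ F k v :=
    (hFs.fderiv ℝ).comp_left (g := fun L : E2 →L[ℝ] ℂ => L v) rfl
  have h1 : Integrable (fun k => fderiv ℝ F k v * ex x k) :=
    (hcdF.mul (continuous_ex x)).integrable_of_hasCompactSupport hsdF.mul_right
  have h3 : Integrable (fun k => F k * ex x k) :=
    (hF.continuous.mul (continuous_ex x)).integrable_of_hasCompactSupport hFs.mul_right
  have h2 : Integrable (fun k => F k * fderiv ℝ (ex x) k v) := by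
    simp_rw [fderiv_ex]
    have := h3.mul_const (Complex.I * ((inner ℝ v x : ℝ) : ℂ))
    simpa [mul_assoc] using this
  have key := integral_mul_fderiv_eq_neg_fderiv_mul_of_integrable (μ := volume)
    h1 h2 h3 (fun y _ => hdF y) (fun y _ => differentiable_ex x y)
  have : ∫ k : E2, F k * fderiv ℝ (ex x) k v
      = (Complex.I * ((inner ℝ v x : ℝ) : ℂ)) * ∫ k : E2, F k * ex x k := by
    simp_rw [fderiv_ex, ← mul_assoc, integral_mul_const]
    ring
  rw [this] at key
  linear_combination key

lemma grad_inner (lam : E2 → ℝ) (k v : E2) :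
    (inner ℝ (gradient lam k) v : ℝ) = fderiv ℝ lam k v := by
  rw [gradient, InnerProductSpace.toDual_symm_apply]

lemma grad_norm_sq (lam : E2 → ℝ) (k : E2) :
    ‖gradient lam k‖ ^ 2 = ∑ j : Fin 2, (fderiv ℝ lam k (EuclideanSpace.single j 1)) ^ 2 := by
  have h1 : ∀ v : E2, ‖v‖ ^ 2 = ∑ j : Fin 2, (v j) ^ 2 := by
    intro v
    rw [EuclideanSpace.norm_sq_eq]
    simp [sq]
  rw [h1]
  congr 1
  ext j
  have : gradient lam k j = (inner ℝ (gradient lam k) (EuclideanSpace.single j 1) : ℝ) := by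
    rw [EuclideanSpace.inner_single_right]; simp
  rw [this, grad_inner]

lemma norm_sq_eq (x : E2) :
    ‖x‖ ^ 2 = ∑ j : Fin 2, (inner ℝ (EuclideanSpace.single j (1:ℝ)) x : ℝ) ^ 2 := by
  rw [EuclideanSpace.norm_sq_eq]
  simp [EuclideanSpace.inner_single_left, sq]

noncomputable def cc (lam : E2 → ℝ) (t : ℝ) (k : E2) : ℂ :=
  Complex.exp (-(Complex.I * t) * (lam k : ℂ))

lemma hasFDerivAt_cc (lam : E2 → ℝ) (t : ℝ) (hlam : Differentiable ℝ lam) (k : E2) :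
    HasFDerivAt (cc lam t)
      (cc lam t k • ((-(Complex.I * t)) • (Complex.ofRealCLM.comp (fderiv ℝ lam k)))) k := by
  have h1 : HasFDerivAt (fun k : E2 => ((lam k : ℝ) : ℂ))
      (Complex.ofRealCLM.comp (fderiv ℝ lam k)) k :=
    Complex.ofRealCLM.hasFDerivAt.comp k (hlam k).hasFDerivAt
  exact (Complex.hasDerivAt_exp _).comp_hasFDerivAt k (h1.const_mul (-(Complex.I * t)))

lemma continuous_cc (lam : E2 → ℝ) (t : ℝ) (hlam : Continuous lam) : Continuous (cc lam t) :=
  Complex.continuous_exp.comp (continuous_const.mul (Complex.continuous_ofReal.comp hlam))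

lemma contDiff_cc (lam : E2 → ℝ) (t : ℝ) (hlam : ContDiff ℝ 2 lam) :
    ContDiff ℝ 2 (cc lam t) :=
  (contDiff_const.mul ((Complex.ofRealCLM.contDiff : ContDiff ℝ 2 _).comp hlam)).cexp

lemma fderiv_gg (h : E2 → ℂ) (lam : E2 → ℝ) (t : ℝ)
    (hh : Differentiable ℝ h) (hlam : Differentiable ℝ lam) (y v : E2) :
    fderiv ℝ (fun z => h z * cc lam t z) y v =
      fderiv ℝ h y v * cc lam t y +
        h y * (cc lam t y * ((-(Complex.I * t)) * ((fderiv ℝ lam y v : ℝ) : ℂ))) := by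
  rw [HasFDerivAt.fderiv (f := fun z => h z * cc lam t z) ((hh y).hasFDerivAt.mul (hasFDerivAt_cc lam t hlam y))]
  simp only [ContinuousLinearMap.add_apply, ContinuousLinearMap.coe_smul', Pi.smul_apply,
    ContinuousLinearMap.smul_apply, ContinuousLinearMap.coe_comp', Function.comp_apply,
    Complex.ofRealCLM_apply, smul_eq_mul]
  ring

lemma second_formula (h : E2 → ℂ) (lam : E2 → ℝ) (t : ℝ)
    (hh : ContDiff ℝ 2 h) (hlam : ContDiff ℝ 2 lam) (k v : E2) :
    fderiv ℝ (fun y => fderiv ℝ (fun z => h z * cc lam t z) y v) k v =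
      cc lam t k * (fderiv ℝ (fun y => fderiv ℝ h y v) k v
        - 2 * Complex.I * t * ((fderiv ℝ lam k v : ℝ) : ℂ) * fderiv ℝ h k v
        - (t : ℂ) ^ 2 * ((fderiv ℝ lam k v : ℝ) : ℂ) ^ 2 * h k
        - Complex.I * t * ((fderiv ℝ (fun y => fderiv ℝ lam y v) k v : ℝ) : ℂ) * h k) := by
  have hdh : Differentiable ℝ h := hh.differentiable (by norm_num)
  have hdl : Differentiable ℝ lam := hlam.differentiable (by norm_num)
  have congr1 : (fun y => fderiv ℝ (fun z => h z * cc lam t z) y v) =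
      (fun y => fderiv ℝ h y v * cc lam t y +
        h y * (cc lam t y * ((-(Complex.I * t)) * ((fderiv ℝ lam y v : ℝ) : ℂ)))) :=
    funext fun y => fderiv_gg h lam t hdh hdl y v
  rw [congr1]
  have cdh : ContDiff ℝ 1 (fun y => fderiv ℝ h y v) :=
    (hh.fderiv_right (le_refl _)).clm_apply contDiff_const
  have cdl : ContDiff ℝ 1 (fun y => fderiv ℝ lam y v) :=
    (hlam.fderiv_right (le_refl _)).clm_apply contDiff_const
  have HA : HasFDerivAt (fun y => fderiv ℝ h y v)
      (fderiv ℝ (fun y => fderiv ℝ h y v) k) k :=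
    ((cdh.differentiable one_ne_zero) k).hasFDerivAt
  have HLr : HasFDerivAt (fun y => fderiv ℝ lam y v)
      (fderiv ℝ (fun y => fderiv ℝ lam y v) k) k :=
    ((cdl.differentiable one_ne_zero) k).hasFDerivAt
  have HL : HasFDerivAt (fun y => ((fderiv ℝ lam y v : ℝ) : ℂ))
      (Complex.ofRealCLM.comp (fderiv ℝ (fun y => fderiv ℝ lam y v) k)) k :=
    Complex.ofRealCLM.hasFDerivAt.comp k HLr
  have Hc := hasFDerivAt_cc lam t hdl k
  have Hh := (hdh k).hasFDerivAt
  have total := (HA.mul Hc).add (Hh.mul (Hc.mul (HL.const_mul (-(Complex.I * t)))))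
  rw [HasFDerivAt.fderiv (f := fun y => fderiv ℝ h y v * cc lam t y + h y * (cc lam t y * ((-(Complex.I * t)) * ((fderiv ℝ lam y v : ℝ) : ℂ)))) total]
  simp only [ContinuousLinearMap.add_apply, ContinuousLinearMap.coe_smul', Pi.smul_apply, Pi.mul_apply,
    ContinuousLinearMap.smul_apply, ContinuousLinearMap.coe_comp', Function.comp_apply,
    Complex.ofRealCLM_apply, smul_eq_mul]
  ring_nf
  rw [Complex.I_sq]
  ring

/-- Double integration by parts for wave packets: if `h ∈ C_c²(ℝ²)`, `λ : ℝ² → ℝ` is `C²`,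
and `w(x) = (1/2π) ∫ h(k) e^{i(⟨k,x⟩ − tλ(k))} dk`, then
`|x|² w(x) = (1/2π) ∫ e^{i(⟨k,x⟩ − tλ(k))} (t²|∇λ|² h − Δh + 2it⟨∇λ, ∇h⟩ + it(Δλ) h) dk`. -/
theorem stmt_15 (h : EuclideanSpace ℝ (Fin 2) → ℂ)
    (hh : ContDiff ℝ 2 h) (hsupp : HasCompactSupport h)
    (lam : EuclideanSpace ℝ (Fin 2) → ℝ) (hlam : ContDiff ℝ 2 lam)
    (t : ℝ) (x : EuclideanSpace ℝ (Fin 2)) :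
    ((‖x‖ ^ 2 : ℝ) : ℂ) * ((1 / (2 * Real.pi) : ℂ) *
        ∫ k : EuclideanSpace ℝ (Fin 2),
          h k * Complex.exp (Complex.I * (((inner ℝ k x : ℝ) - t * lam k : ℝ) : ℂ)))
    = (1 / (2 * Real.pi) : ℂ) *
        ∫ k : EuclideanSpace ℝ (Fin 2),
          Complex.exp (Complex.I * (((inner ℝ k x : ℝ) - t * lam k : ℝ) : ℂ)) *
            (((t ^ 2 * ‖gradient lam k‖ ^ 2 : ℝ) : ℂ) * h k - lapC h k +
              2 * Complex.I * (t : ℂ) *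
                (∑ ℓ : Fin 2, ((fderiv ℝ lam k (EuclideanSpace.single ℓ 1) : ℝ) : ℂ) *
                  fderiv ℝ h k (EuclideanSpace.single ℓ 1)) +
              Complex.I * (t : ℂ) * ((lapR lam k : ℝ) : ℂ) * h k) := by
  have hdl : Differentiable ℝ lam := hlam.differentiable (by norm_num)
  have key1 : ∀ k : E2, Complex.exp (Complex.I * (((inner ℝ k x : ℝ) - t * lam k : ℝ) : ℂ))
      = ex x k * cc lam t k := by
    intro k
    rw [ex, cc, ← Complex.exp_add]
    congr 1
    push_cast
    ring
  set g : E2 → ℂ := fun z => h z * cc lam t z with hgdef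
  have hg2 : ContDiff ℝ 2 g := hh.mul (contDiff_cc lam t hlam)
  have hgs : HasCompactSupport g := hsupp.mul_right
  -- notation for direction
  set e : Fin 2 → E2 := fun j => EuclideanSpace.single j 1 with hedef
  -- second-derivative functions
  have hF1c : ∀ j, ContDiff ℝ 1 (fun y => fderiv ℝ g y (e j)) := fun j =>
    (hg2.fderiv_right (le_refl _)).clm_apply contDiff_const
  have hF1s : ∀ j, HasCompactSupport (fun y => fderiv ℝ g y (e j)) := fun j =>
    (hgs.fderiv ℝ).comp_left (g := fun L : E2 →L[ℝ] ℂ => L (e j)) rfl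
  -- each coordinate double ibp
  have coord : ∀ j : Fin 2,
      ∫ k : E2, -(fderiv ℝ (fun y => fderiv ℝ g y (e j)) k (e j)) * ex x k
        = ((inner ℝ (e j) x : ℝ) : ℂ) ^ 2 * ∫ k : E2, g k * ex x k := by
    intro j
    have i1 := ibp (fun y => fderiv ℝ g y (e j)) (hF1c j) (hF1s j) x (e j)
    have i2 := ibp g (hg2.of_le one_le_two) hgs x (e j)
    simp only [neg_mul]
    rw [integral_neg, i1, i2]
    have : Complex.I ^ 2 = -1 := Complex.I_sq
    linear_combination (-(((inner ℝ (e j) x : ℝ) : ℂ))^2 * (∫ k : E2, g k * ex x k)) * this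
  -- integrability of second-derivative integrands
  have hint : ∀ j : Fin 2,
      Integrable (fun k : E2 => -(fderiv ℝ (fun y => fderiv ℝ g y (e j)) k (e j)) * ex x k) := by
    intro j
    apply Continuous.integrable_of_hasCompactSupport
    · exact ((((hF1c j).continuous_fderiv one_ne_zero).clm_apply continuous_const).neg).mul
        (continuous_ex x)
    · have hs := ((hF1s j).fderiv ℝ).comp_left (g := fun L : E2 →L[ℝ] ℂ => L (e j)) rfl
      exact (hs.comp_left (g := Neg.neg) neg_zero).mul_right
  -- pointwise identity for the RHS integrand
  have key2 : ∀ k : E2,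
      Complex.exp (Complex.I * (((inner ℝ k x : ℝ) - t * lam k : ℝ) : ℂ)) *
            (((t ^ 2 * ‖gradient lam k‖ ^ 2 : ℝ) : ℂ) * h k - lapC h k +
              2 * Complex.I * (t : ℂ) *
                (∑ ℓ : Fin 2, ((fderiv ℝ lam k (EuclideanSpace.single ℓ 1) : ℝ) : ℂ) *
                  fderiv ℝ h k (EuclideanSpace.single ℓ 1)) +
              Complex.I * (t : ℂ) * ((lapR lam k : ℝ) : ℂ) * h k)
      = (∑ j : Fin 2, -(fderiv ℝ (fun y => fderiv ℝ g y (e j)) k (e j))) * ex x k := by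
    intro k
    rw [key1]
    have sf : ∀ j : Fin 2, fderiv ℝ (fun y => fderiv ℝ g y (e j)) k (e j) =
        cc lam t k * (fderiv ℝ (fun y => fderiv ℝ h y (e j)) k (e j)
          - 2 * Complex.I * t * ((fderiv ℝ lam k (e j) : ℝ) : ℂ) * fderiv ℝ h k (e j)
          - (t : ℂ) ^ 2 * ((fderiv ℝ lam k (e j) : ℝ) : ℂ) ^ 2 * h k
          - Complex.I * t * ((fderiv ℝ (fun y => fderiv ℝ lam y (e j)) k (e j) : ℝ) : ℂ) * h k) :=
      fun j => second_formula h lam t hh hlam k (e j)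
    simp only [Fin.sum_univ_two, sf]
    simp only [sf, hedef, lapC, lapR, grad_norm_sq lam k, Fin.sum_univ_two]
    push_cast
    ring
  have L1 : (∫ k : E2, h k * Complex.exp (Complex.I * (((inner ℝ k x : ℝ) - t * lam k : ℝ) : ℂ)))
      = ∫ k : E2, g k * ex x k := by
    congr 1
    funext k
    rw [key1 k, hgdef]
    ring
  rw [L1]
  have R1 : (∫ k : E2,
      Complex.exp (Complex.I * (((inner ℝ k x : ℝ) - t * lam k : ℝ) : ℂ)) *
            (((t ^ 2 * ‖gradient lam k‖ ^ 2 : ℝ) : ℂ) * h k - lapC h k +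
              2 * Complex.I * (t : ℂ) *
                (∑ ℓ : Fin 2, ((fderiv ℝ lam k (EuclideanSpace.single ℓ 1) : ℝ) : ℂ) *
                  fderiv ℝ h k (EuclideanSpace.single ℓ 1)) +
              Complex.I * (t : ℂ) * ((lapR lam k : ℝ) : ℂ) * h k))
      = ∫ k : E2, (∑ j : Fin 2, -(fderiv ℝ (fun y => fderiv ℝ g y (e j)) k (e j))) * ex x k := by
    congr 1
    funext k
    exact key2 k
  rw [R1]
  have R2 : (∫ k : E2, (∑ j : Fin 2, -(fderiv ℝ (fun y => fderiv ℝ g y (e j)) k (e j))) * ex x k)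
      = ∑ j : Fin 2, ∫ k : E2, -(fderiv ℝ (fun y => fderiv ℝ g y (e j)) k (e j)) * ex x k := by
    rw [← integral_finset_sum _ (fun j _ => hint j)]
    congr 1
    funext k
    rw [Finset.sum_mul]
  rw [R2]
  have R3 : ∑ j : Fin 2, (∫ k : E2, -(fderiv ℝ (fun y => fderiv ℝ g y (e j)) k (e j)) * ex x k)
      = ((‖x‖ ^ 2 : ℝ) : ℂ) * ∫ k : E2, g k * ex x k := by
    simp only [coord]
    rw [← Finset.sum_mul]
    congr 1
    rw [norm_sq_eq x]
    push_cast
    rfl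
  rw [R3]
  ring
end
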